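/- Fix q ∈ (1/3, 2/3) and let δ* = min{4/q², 4/(1−q)²}. Let g(x) = x·(1 − δ·(1−x)·(x−q)). Then 2/(q·(1−q)) < δ*, and for every δ ∈ (2/(q·(1−q)), δ*) the Nash equilibrium q is a repelling fixed point of g (indeed |g'(q)| = |1 − δ·q·(1−q)| > 1), and the set of x ∈ (0,1) whose orbit under g converges to q is countable. -/

import Mathlib

open Filter

/-- A fixed point `p` of a map `f` of the unit interval `[0,1]` is *repelling*
if there is an open neighborhood `U` of `p` (relative to `[0,1]`) such that every
orbit starting in `U \ {p}` eventually leaves `U`. -/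
def IsRepellingFixedPt (f : ℝ → ℝ) (p : ℝ) : Prop :=
  ∃ U : Set ℝ, IsOpen U ∧ p ∈ U ∧
    ∀ y ∈ U ∩ Set.Icc (0:ℝ) 1, y ≠ p → ∃ n : ℕ, f^[n] y ∉ U

open Polynomial in
lemma fiber_finite' (δ q c : ℝ) (hδ : δ ≠ 0) :
    {x : ℝ | x * (1 - δ * (1 - x) * (x - q)) = c}.Finite := by
  set p : Polynomial ℝ := C δ * X ^ 3 + C (-(δ*(1+q))) * X ^ 2 + C (1 + δ*q) * X + C (-c) with hp
  have hpne : p ≠ 0 := by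
    intro h
    have h3 : p.coeff 3 = 0 := by rw [h]; simp
    rw [hp] at h3
    simp only [coeff_add, coeff_C_mul, coeff_X_pow, coeff_C, coeff_X] at h3
    norm_num at h3
    exact hδ h3
  refine (Polynomial.finite_setOf_isRoot hpne).subset ?_
  intro x hx
  simp only [Set.mem_setOf_eq] at hx ⊢
  simp only [IsRoot, hp, eval_add, eval_mul, eval_pow, eval_C, eval_X]
  linear_combination hx


/-- Fix `q ∈ (1/3, 2/3)` and let `δ* = min {4/q², 4/(1−q)²}`, and
`g_δ x = x * (1 − δ*(1−x)*(x−q))`.  Then `2/(q(1−q)) < δ*`, and for every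
`δ ∈ (2/(q(1−q)), δ*)`: the Nash equilibrium `q` is a repelling fixed point of
`g_δ` (indeed `g_δ'(q) = 1 − δq(1−q)` with `|1 − δq(1−q)| > 1`), and the set of
`x ∈ (0,1)` whose orbit under `g_δ` converges to `q` is countable. -/
theorem ppi_instability_middle_equilibria (q : ℝ) (hq : q ∈ Set.Ioo (1/3:ℝ) (2/3))
    (g : ℝ → ℝ → ℝ)
    (hg : ∀ δ x : ℝ, g δ x = x * (1 - δ * (1 - x) * (x - q))) :
    2 / (q * (1 - q)) < min (4 / q ^ 2) (4 / (1 - q) ^ 2) ∧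
    ∀ δ ∈ Set.Ioo (2 / (q * (1 - q))) (min (4 / q ^ 2) (4 / (1 - q) ^ 2)),
      (HasDerivAt (g δ) (1 - δ * q * (1 - q)) q ∧ 1 < |1 - δ * q * (1 - q)|) ∧
      IsRepellingFixedPt (g δ) q ∧
      Set.Countable {x ∈ Set.Ioo (0:ℝ) 1 |
        Tendsto (fun n : ℕ => (g δ)^[n] x) atTop (nhds q)} := by
  obtain ⟨hq1, hq2⟩ := hq
  have hq0 : 0 < q := by linarith
  have hq1' : q < 1 := by linarith
  have hqq : 0 < q * (1 - q) := by nlinarith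
  constructor
  · rw [lt_min_iff]
    constructor
    · rw [div_lt_div_iff₀ hqq (pow_pos hq0 2)]
      nlinarith
    · rw [div_lt_div_iff₀ hqq (pow_pos (by linarith : (0:ℝ) < 1 - q) 2)]
      nlinarith
  · rintro δ ⟨hδl, hδr⟩
    have hδ0 : 0 < δ := lt_trans (by positivity) hδl
    have hA : 2 < δ * (q * (1 - q)) := by
      rw [div_lt_iff₀ hqq] at hδl; nlinarith
    set A := δ * (q * (1 - q)) with hAdef
    have hA' : δ * q * (1 - q) = A := by rw [hAdef]; ring
    have hgfun : g δ = fun x => x * (1 - δ * (1 - x) * (x - q)) := funext (hg δ)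
    -- neighborhood
    set ε := min 1 ((A - 2) / (4 * δ)) with hεdef
    have hε0 : 0 < ε := lt_min one_pos (div_pos (by linarith) (by positivity))
    have hε1 : ε ≤ 1 := min_le_left _ _
    have hδε : δ * ε ≤ (A - 2) / 4 := by
      have hε2 : ε ≤ (A - 2) / (4 * δ) := min_le_right _ _
      have h := mul_le_mul_of_nonneg_left hε2 hδ0.le
      have heq : δ * ((A - 2) / (4 * δ)) = (A - 2) / 4 := by field_simp
      linarith
    set U := Set.Ioo (q - ε) (q + ε) with hUdef
    have hqU : q ∈ U := ⟨by linarith, by linarith⟩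
    have hkey : ∀ x ∈ U, (A / 2) * |x - q| ≤ |g δ x - q| := by
      intro x hx
      obtain ⟨hxl, hxr⟩ := hx
      have hxq : |x - q| ≤ ε := (abs_le.mpr ⟨by linarith, by linarith⟩)
      have hbound : 1 + A / 2 ≤ δ * x * (1 - x) := by
        have h2 : |1 - x - q| ≤ 4 / 3 := abs_le.mpr ⟨by linarith, by linarith⟩
        have habs : |δ * ((x - q) * (1 - x - q))| ≤ (A - 2) / 3 := by
          rw [abs_mul, abs_mul, abs_of_pos hδ0]
          calc δ * (|x - q| * |1 - x - q|) ≤ δ * (ε * (4 / 3)) := by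
                apply mul_le_mul_of_nonneg_left _ hδ0.le
                exact mul_le_mul hxq h2 (abs_nonneg _) hε0.le
            _ ≤ (A - 2) / 3 := by nlinarith
        have hid : δ * x * (1 - x) = A + δ * ((x - q) * (1 - x - q)) := by
          rw [hAdef]; ring
        have := (abs_le.mp habs).1
        rw [hid]; linarith
      have hfact : g δ x - q = (x - q) * (1 - δ * x * (1 - x)) := by rw [hg]; ring
      rw [hfact, abs_mul]
      have h3 : A / 2 ≤ |1 - δ * x * (1 - x)| := by
        calc A / 2 ≤ δ * x * (1 - x) - 1 := by linarith
          _ ≤ |δ * x * (1 - x) - 1| := le_abs_self _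
          _ = |1 - δ * x * (1 - x)| := abs_sub_comm _ _
      calc A / 2 * |x - q| ≤ |1 - δ * x * (1 - x)| * |x - q| :=
            mul_le_mul_of_nonneg_right h3 (abs_nonneg _)
        _ = |x - q| * |1 - δ * x * (1 - x)| := mul_comm _ _
    have hescape : ∀ y ∈ U, y ≠ q → ∃ n : ℕ, (g δ)^[n] y ∉ U := by
      intro y hy hyq
      by_contra hcon
      push_neg at hcon
      have hgrow : ∀ n : ℕ, (A / 2) ^ n * |y - q| ≤ |(g δ)^[n] y - q| := by
        intro n
        induction n with
        | zero => simp
        | succ n ih =>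
          rw [Function.iterate_succ_apply']
          calc (A / 2) ^ (n + 1) * |y - q| = (A / 2) * ((A / 2) ^ n * |y - q|) := by ring
            _ ≤ (A / 2) * |(g δ)^[n] y - q| := by
                apply mul_le_mul_of_nonneg_left ih; linarith
            _ ≤ |g δ ((g δ)^[n] y) - q| := hkey _ (hcon n)
      have hyq0 : 0 < |y - q| := abs_pos.mpr (sub_ne_zero.mpr hyq)
      obtain ⟨n, hn⟩ := pow_unbounded_of_one_lt (ε / |y - q|) (show (1:ℝ) < A / 2 by linarith)
      have h1 : |(g δ)^[n] y - q| < ε := by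
        obtain ⟨ha, hb⟩ := hcon n
        exact abs_lt.mpr ⟨by linarith, by linarith⟩
      rw [div_lt_iff₀ hyq0] at hn
      linarith [hgrow n]
    refine ⟨⟨?_, ?_⟩, ⟨U, isOpen_Ioo, hqU, fun y hy hyq => hescape y hy.1 hyq⟩, ?_⟩
    · rw [hgfun]
      have h := (hasDerivAt_id q).mul
        ((((hasDerivAt_const q δ).mul ((hasDerivAt_const q (1:ℝ)).sub (hasDerivAt_id q))).mul
          ((hasDerivAt_id q).sub (hasDerivAt_const q q))).const_sub 1)
      refine h.congr_deriv ?_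
      simp only [Pi.mul_apply, Pi.sub_apply, id_eq]
      ring
    · rw [lt_abs]
      right
      linarith [hA'] 
    · have hsub : {x ∈ Set.Ioo (0:ℝ) 1 |
          Tendsto (fun n : ℕ => (g δ)^[n] x) atTop (nhds q)} ⊆
          ⋃ n : ℕ, (g δ)^[n] ⁻¹' {q} := by
        rintro x ⟨-, htend⟩
        have hUmem : ∀ᶠ n in atTop, (g δ)^[n] x ∈ U :=
          htend (isOpen_Ioo.mem_nhds hqU)
        obtain ⟨N, hN⟩ := eventually_atTop.mp hUmem
        have hNq : (g δ)^[N] x = q := by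
          by_contra hne
          obtain ⟨n, hn⟩ := hescape _ (hN N le_rfl) hne
          exact hn (by rw [← Function.iterate_add_apply]; exact hN (n + N) (Nat.le_add_left _ _))
        exact Set.mem_iUnion.mpr ⟨N, hNq⟩
      refine Set.Countable.mono hsub (Set.countable_iUnion fun n => Set.Finite.countable ?_)
      induction n with
      | zero => simp
      | succ n ih =>
        rw [Function.iterate_succ, Set.preimage_comp]
        have heq : g δ ⁻¹' ((g δ)^[n] ⁻¹' {q}) =
            ⋃ c ∈ (g δ)^[n] ⁻¹' {q}, g δ ⁻¹' {c} := by
          ext z; simp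
        rw [heq]
        refine Set.Finite.biUnion ih fun c _ => ?_
        have : g δ ⁻¹' {c} = {x : ℝ | x * (1 - δ * (1 - x) * (x - q)) = c} := by
          ext z; simp [hg]
        rw [this]
        exact fiber_finite' δ q c hδ0.ne'
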